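/- Let 0 < θ < β < π/2, and let Γ₂ be the counterclockwise circular arc from cos(β)e^{-iβ} to cos(β)e^{iβ} along the circle of center 1 and radius sin β. Then the distance from Γ₂ to the set Δ_θ = 1 - B_θ is strictly positive, where B_θ is the Stolz domain of angle θ. -/

import Mathlib

open Complex

lemma halfplane_mem (θ α : ℝ) (hα : Real.cos α ≤ Real.sin θ)
    (u : ℂ) (hu : u ∈ convexHull ℝ ({1} ∪ Metric.closedBall (0:ℂ) (Real.sin θ))) :
    (u * Complex.exp (I * (-α : ℝ))).re ≤ Real.sin θ := by
  have hlin : IsLinearMap ℝ (fun v : ℂ => (v * Complex.exp (I * (-α : ℝ))).re) := by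
    constructor
    · intro a b; simp [add_mul]
    · intro r a; simp [Complex.smul_re, smul_mul_assoc]; ring
  have hconv : Convex ℝ {v : ℂ | (v * Complex.exp (I * (-α : ℝ))).re ≤ Real.sin θ} :=
    convex_halfSpace_le hlin _
  have hsub : ({1} ∪ Metric.closedBall (0:ℂ) (Real.sin θ)) ⊆
      {v : ℂ | (v * Complex.exp (I * (-α : ℝ))).re ≤ Real.sin θ} := by
    rintro v (rfl | hv)
    · simp only [Set.mem_setOf_eq, one_mul]
      rw [mul_comm, Complex.exp_ofReal_mul_I_re, Real.cos_neg]
      exact hα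
    · have h1 : (v * Complex.exp (I * (-α : ℝ))).re ≤ ‖v * Complex.exp (I * (-α : ℝ))‖ :=
        Complex.re_le_norm _
      have h2 : ‖Complex.exp (I * (-α : ℝ))‖ = 1 := by
        rw [Complex.norm_exp]; simp
      have h3 : ‖v‖ ≤ Real.sin θ := by
        simpa using Metric.mem_closedBall.mp hv
      simp only [Set.mem_setOf_eq]
      calc (v * Complex.exp (I * (-α : ℝ))).re ≤ _ := h1
        _ ≤ Real.sin θ := by rw [norm_mul, h2, mul_one]; exact h3
  exact convexHull_min hsub hconv hu

def stolzDomain (γ : ℝ) : Set ℂ :=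
  interior (convexHull ℝ ({1} ∪ Metric.closedBall (0:ℂ) (Real.sin γ)))

def reflStolz (γ : ℝ) : Set ℂ := (fun z => 1 - z) '' stolzDomain γ

/-- The contour `Γ₂`: the counterclockwise circular arc from `cos β · e^{-iβ}` to
`cos β · e^{iβ}` along the circle of centre `1` and radius `sin β`. -/
def gammaTwo (β : ℝ) : Set ℂ :=
  {z : ℂ | ∃ t ∈ Set.Icc (-(Real.pi / 2 + β)) (Real.pi / 2 + β),
    z = 1 + (Real.sin β : ℂ) * Complex.exp (I * t)}

/-- For `0 < θ < β < π/2`, the distance from the arc `Γ₂` (on the circle of centre `1`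
and radius `sin β`) to the reflected Stolz domain `Δ_θ = 1 - B_θ` is strictly
positive. -/
theorem stmt7 (θ β : ℝ) (h1 : 0 < θ) (h2 : θ < β) (h3 : β < Real.pi / 2) :
    ∃ δ > (0:ℝ), ∀ z ∈ gammaTwo β, ∀ w ∈ reflStolz θ, δ ≤ dist z w := by
  have hπ := Real.pi_pos
  refine ⟨Real.cos β * Real.sin (β - θ), ?_, ?_⟩
  · exact mul_pos (Real.cos_pos_of_mem_Ioo ⟨by linarith, h3⟩)
      (Real.sin_pos_of_pos_of_lt_pi (by linarith) (by linarith))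
  intro z hz w hw
  obtain ⟨t, ht, rfl⟩ := hz
  obtain ⟨u, hu, rfl⟩ := hw
  set δ := Real.cos β * Real.sin (β - θ) with hδdef
  have key : Real.sin β * Real.cos (β - θ) = Real.sin θ + δ := by
    rw [hδdef, Real.cos_sub, Real.sin_sub]
    linear_combination Real.sin θ * Real.sin_sq_add_cos_sq β
  set α := max (Real.pi/2 - θ) (min (3*Real.pi/2 + θ) (t + Real.pi)) with hαdef
  have hα1 : Real.pi/2 - θ ≤ α := le_max_left _ _
  have hα2 : α ≤ 3*Real.pi/2 + θ := max_le (by linarith) (min_le_left _ _)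
  -- cos α ≤ sin θ
  have hcosα : Real.cos α ≤ Real.sin θ := by
    have h := Real.cos_sub_cos α (Real.pi/2 - θ)
    have hs1 : 0 ≤ Real.sin ((α + (Real.pi/2 - θ))/2) :=
      Real.sin_nonneg_of_nonneg_of_le_pi (by linarith) (by linarith)
    have hs2 : 0 ≤ Real.sin ((α - (Real.pi/2 - θ))/2) :=
      Real.sin_nonneg_of_nonneg_of_le_pi (by linarith) (by linarith)
    have : Real.cos α ≤ Real.cos (Real.pi/2 - θ) := by nlinarith
    rwa [Real.cos_pi_div_two_sub] at this
  -- |t + π - α| ≤ β - θ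
  have hub : t + Real.pi - α ≤ β - θ := by
    rcases le_total (t + Real.pi) (3*Real.pi/2 + θ) with h | h
    · have : t + Real.pi ≤ α := le_trans (le_of_eq (min_eq_right h).symm) (le_max_right _ _)
      linarith
    · have : 3*Real.pi/2 + θ ≤ α := le_trans (le_of_eq (min_eq_left h).symm) (le_max_right _ _)
      have ht2 := ht.2
      linarith
  have hlb : -(β - θ) ≤ t + Real.pi - α := by
    have hαle : α ≤ max (Real.pi/2 - θ) (t + Real.pi) :=
      max_le_max le_rfl (min_le_right _ _)
    rcases le_total (t + Real.pi) (Real.pi/2 - θ) with h | h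
    · have hα' : α ≤ Real.pi/2 - θ := by rwa [max_eq_left h] at hαle
      have ht1 := ht.1
      linarith
    · have hα' : α ≤ t + Real.pi := by rwa [max_eq_right h] at hαle
      linarith
  have hcosd : Real.cos (β - θ) ≤ Real.cos (t + Real.pi - α) := by
    rw [← Real.cos_abs (t + Real.pi - α)]
    exact Real.cos_le_cos_of_nonneg_of_le_pi (abs_nonneg _) (by linarith)
      (abs_le.mpr ⟨hlb, hub⟩)
  -- the separating computation
  set c := Complex.exp (I * (-α : ℝ)) with hcdef
  set z := 1 + (Real.sin β : ℂ) * Complex.exp (I * t)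
  set w := 1 - u
  have hzw : z - w = (Real.sin β : ℂ) * Complex.exp (I * (t:ℂ)) + u := by
    simp only [z, w]; ring
  have hEt : Complex.exp (I * (t:ℂ)) * c = Complex.exp (I * ((t - α : ℝ) : ℂ)) := by
    rw [hcdef, ← Complex.exp_add]
    congr 1
    push_cast
    ring
  have hreE : (Complex.exp (I * ((t - α : ℝ) : ℂ))).re = Real.cos (t - α) := by
    rw [mul_comm, Complex.exp_ofReal_mul_I_re]
  have h4 : Real.cos (t - α) = -Real.cos (t + Real.pi - α) := by
    have := Real.cos_sub_pi (t + Real.pi - α)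
    rw [show t + Real.pi - α - Real.pi = t - α by ring] at this
    linarith
  have hre : ((-(z - w)) * c).re = Real.sin β * Real.cos (t + Real.pi - α) - (u * c).re := by
    have e1 : (-(z - w)) * c = -((Real.sin β : ℂ) * (Complex.exp (I * (t:ℂ)) * c)) - u * c := by
      rw [hzw]; ring
    rw [e1, hEt]
    rw [Complex.sub_re, Complex.neg_re, Complex.re_ofReal_mul, hreE, h4]
    ring
  have hhalf : (u * c).re ≤ Real.sin θ :=
    halfplane_mem θ α hcosα u (interior_subset hu)
  have hsinβ : 0 ≤ Real.sin β := Real.sin_nonneg_of_nonneg_of_le_pi (by linarith) (by linarith)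
  have hcabs : ‖c‖ = 1 := by rw [hcdef, Complex.norm_exp]; simp
  calc δ = Real.sin β * Real.cos (β - θ) - Real.sin θ := by linarith
    _ ≤ Real.sin β * Real.cos (t + Real.pi - α) - (u * c).re := by nlinarith
    _ = ((-(z - w)) * c).re := hre.symm
    _ ≤ ‖(-(z - w)) * c‖ := Complex.re_le_norm _
    _ = ‖z - w‖ := by rw [norm_mul, hcabs, mul_one, norm_neg]
    _ = dist z w := (Complex.dist_eq z w).symm
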